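/- Let π : C → D be a morphism of k-coalgebras and (B, θ_B) a left D-contramodule. Define linear maps f, g : Hom_k(D ⊗ C, B) → Hom_k(C, B) by f(ψ)(c) = ψ(π(c₍₁₎) ⊗ c₍₂₎) and g(ψ)(c) = θ_B(d ↦ ψ(d ⊗ c)), and let K = range(f − g) ⊆ Hom_k(C,B). Then K is a subcontramodule of the free C-contramodule (Hom_k(C,B), θ_free): for every linear Φ : C → Hom_k(C,B) whose range is contained in K, one has θ_free(Φ) ∈ K. Consequently the quotient Ind_D^C(B) := Hom_k(C,B)/K carries a well-defined induced C-contra-action. -/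

import Mathlib

/-!
STATEMENT 13: For a morphism of coalgebras π : C → D and a left D-contramodule (B, θ_B),
the subspace K = range(f − g) ⊆ Hom_k(C,B), where f(ψ)(c) = ψ(π(c₍₁₎) ⊗ c₍₂₎) and
g(ψ)(c) = θ_B(d ↦ ψ(d ⊗ c)), is a subcontramodule of the free C-contramodule
(Hom_k(C,B), θ_free); consequently Ind_D^C(B) = Hom_k(C,B)/K carries a well-defined
induced C-contra-action.
-/

open TensorProduct LinearMap

noncomputable section

variable (k : Type*) [Field k]
variable (C : Type*) [AddCommGroup C] [Module k C] [Coalgebra k C]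
variable (D : Type*) [AddCommGroup D] [Module k D] [Coalgebra k D]
variable (B : Type*) [AddCommGroup B] [Module k B]

def IsContramodule {B' : Type*} [AddCommGroup B'] [Module k B']
    (θ : (D →ₗ[k] B') →ₗ[k] B') : Prop :=
  (∀ Φ : D →ₗ[k] (D →ₗ[k] B'),
      θ (θ ∘ₗ Φ) = θ ((TensorProduct.lift Φ.flip) ∘ₗ Coalgebra.comul)) ∧
  (∀ b : B', θ ((LinearMap.toSpanSingleton k B' b) ∘ₗ Coalgebra.counit) = b)

/-- A subspace `N` is a subcontramodule of `(B', θ)` if `θ(φ) ∈ N` whenever `range φ ⊆ N`. -/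
def IsSubContra {B' : Type*} [AddCommGroup B'] [Module k B']
    (θ : (C →ₗ[k] B') →ₗ[k] B') (N : Submodule k B') : Prop :=
  ∀ φ : C →ₗ[k] B', LinearMap.range φ ≤ N → θ φ ∈ N

/-- The free contra-action on `Hom_k(C,V)`: `θ_free(Φ)(c) = Φ(c₍₂₎)(c₍₁₎)`. -/
def freeContra (V : Type*) [AddCommGroup V] [Module k V] :
    (C →ₗ[k] (C →ₗ[k] V)) →ₗ[k] (C →ₗ[k] V) :=
  (LinearMap.lcomp k V (Coalgebra.comul (R := k) (A := C))) ∘ₗ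
    (TensorProduct.uncurry (RingHom.id k) C C V) ∘ₗ (LinearMap.lflip.toLinearMap)

/-- `f(ψ)(c) = ψ(π(c₍₁₎) ⊗ c₍₂₎)`. -/
def fInd (π : C →ₗ[k] D) : ((D ⊗[k] C) →ₗ[k] B) →ₗ[k] (C →ₗ[k] B) :=
  LinearMap.lcomp k B
    ((TensorProduct.map π LinearMap.id) ∘ₗ (Coalgebra.comul (R := k) (A := C)))

/-- `g(ψ)(c) = θ_B(d ↦ ψ(d ⊗ c))`. -/
def gInd (θB : (D →ₗ[k] B) →ₗ[k] B) : ((D ⊗[k] C) →ₗ[k] B) →ₗ[k] (C →ₗ[k] B) :=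
  (LinearMap.llcomp k C (D →ₗ[k] B) B θB) ∘ₗ (LinearMap.lflip.toLinearMap) ∘ₗ
    (TensorProduct.lcurry (RingHom.id k) D C B)


set_option linter.unusedSectionVars false in
lemma uncurry_eq_lift' {M N P : Type*} [AddCommGroup M] [Module k M]
    [AddCommGroup N] [Module k N] [AddCommGroup P] [Module k P]
    (f : M →ₗ[k] N →ₗ[k] P) :
    TensorProduct.uncurry (RingHom.id k) M N P f = TensorProduct.lift f := by
  apply TensorProduct.ext'
  intro x y
  simp

set_option linter.unusedSectionVars false in
lemma freeContra_apply' (ψ : C →ₗ[k] (C →ₗ[k] B)) (c : C) :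
    freeContra k C B ψ c = TensorProduct.lift ψ.flip (Coalgebra.comul c) := by
  show TensorProduct.uncurry (RingHom.id k) C C B (LinearMap.lflip ψ) (Coalgebra.comul c) = _
  rw [uncurry_eq_lift']
  rfl

set_option linter.unusedSectionVars false in
lemma fInd_apply' (π : C →ₗ[k] D) (ψ : (D ⊗[k] C) →ₗ[k] B) (c : C) :
    fInd k C D B π ψ c = ψ (TensorProduct.map π LinearMap.id (Coalgebra.comul c)) := rfl

set_option linter.unusedSectionVars false in
lemma gInd_apply' (θB : (D →ₗ[k] B) →ₗ[k] B) (ψ : (D ⊗[k] C) →ₗ[k] B) (c : C) :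
    gInd k C D B θB ψ c = θB (LinearMap.lflip (R₀ := k) (TensorProduct.lcurry (RingHom.id k) D C B ψ) c) := rfl

/-- The lifted element `A(d ⊗ c) = Σ Φ̂(c₍₂₎)(d ⊗ c₍₁₎)`. -/
def indLift (Φ : C →ₗ[k] ((D ⊗[k] C) →ₗ[k] B)) : (D ⊗[k] C) →ₗ[k] B :=
  TensorProduct.lift
    ((TensorProduct.lift
        (LinearMap.lflip.toLinearMap ∘ₗ (TensorProduct.lcurry (RingHom.id k) D C B) ∘ₗ Φ).flip ∘ₗ
      Coalgebra.comul).flip)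

theorem indKey (π : C →ₗ[k] D) (θB : (D →ₗ[k] B) →ₗ[k] B)
    (Φ : C →ₗ[k] ((D ⊗[k] C) →ₗ[k] B)) :
    freeContra k C B ((fInd k C D B π - gInd k C D B θB) ∘ₗ Φ)
      = (fInd k C D B π - gInd k C D B θB) (indLift k C D B Φ) := by
  set q : C →ₗ[k] C →ₗ[k] (D →ₗ[k] B) :=
    LinearMap.lflip.toLinearMap ∘ₗ (TensorProduct.lcurry (RingHom.id k) D C B) ∘ₗ Φ with hq
  set r : (C ⊗[k] C) →ₗ[k] (D →ₗ[k] B) := TensorProduct.lift q.flip with hr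
  set m : C →ₗ[k] (D →ₗ[k] B) := r ∘ₗ Coalgebra.comul with hm
  have hA : indLift k C D B Φ = TensorProduct.lift m.flip := rfl
  set A := indLift k C D B Φ with hAdef
  set Θ : C ⊗[k] (C ⊗[k] C) →ₗ[k] B := TensorProduct.lift (r.flip ∘ₗ π) with hΘ
  ext c
  rw [LinearMap.sub_apply, LinearMap.sub_apply]
  simp only [LinearMap.sub_apply, freeContra_apply']
  have hflip : ((fInd k C D B π - gInd k C D B θB) ∘ₗ Φ).flip
      = (fInd k C D B π ∘ₗ Φ).flip - (gInd k C D B θB ∘ₗ Φ).flip := by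
    ext x y; simp
  have hliftsub : TensorProduct.lift ((fInd k C D B π ∘ₗ Φ).flip - (gInd k C D B θB ∘ₗ Φ).flip)
      = TensorProduct.lift (fInd k C D B π ∘ₗ Φ).flip
        - TensorProduct.lift (gInd k C D B θB ∘ₗ Φ).flip := by
    apply TensorProduct.ext'
    intro x y
    simp
  rw [hflip, hliftsub, LinearMap.sub_apply]
  -- f-part
  have hf1 : TensorProduct.lift (fInd k C D B π ∘ₗ Φ).flip
      = Θ ∘ₗ (TensorProduct.assoc k C C C).toLinearMap ∘ₗ
          ((Coalgebra.comul (R := k) (A := C)).rTensor C) := by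
    apply TensorProduct.ext'
    intro x y
    simp only [TensorProduct.lift.tmul, LinearMap.flip_apply, LinearMap.comp_apply,
      LinearMap.rTensor_tmul]
    rw [fInd_apply']
    have : (Φ y) ∘ₗ (TensorProduct.map π LinearMap.id)
        = Θ ∘ₗ (TensorProduct.assoc k C C C).toLinearMap ∘ₗ
            ((TensorProduct.mk k (C ⊗[k] C) C).flip y) := by
      apply TensorProduct.ext'
      intro u v
      simp [hΘ, hr, hq, TensorProduct.lift.tmul]
    exact LinearMap.congr_fun this (Coalgebra.comul x)
  have hf2 : fInd k C D B π A c = Θ ((Coalgebra.comul (R := k) (A := C)).lTensor C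
      (Coalgebra.comul c)) := by
    rw [fInd_apply']
    have : A ∘ₗ (TensorProduct.map π LinearMap.id)
        = Θ ∘ₗ ((Coalgebra.comul (R := k) (A := C)).lTensor C) := by
      apply TensorProduct.ext'
      intro x y
      show TensorProduct.lift m.flip (π x ⊗ₜ[k] y)
          = Θ ((Coalgebra.comul (R := k) (A := C)).lTensor C (x ⊗ₜ[k] y))
      rw [LinearMap.lTensor_tmul, hΘ, TensorProduct.lift.tmul, TensorProduct.lift.tmul]
      simp [hm]
    exact LinearMap.congr_fun this (Coalgebra.comul c)
  -- g-part
  have hg1 : TensorProduct.lift (gInd k C D B θB ∘ₗ Φ).flip = θB ∘ₗ r := by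
    apply TensorProduct.ext'
    intro x y
    simp [gInd, hr, hq, TensorProduct.lift.tmul]
  have hg2 : gInd k C D B θB A c = θB (r (Coalgebra.comul c)) := by
    rw [gInd_apply']
    congr 1
  rw [hf1, hg1, hf2, hg2]
  simp only [LinearMap.comp_apply, LinearMap.sub_apply]
  congr 2
  exact Coalgebra.coassoc_apply c

theorem induction_kernel_isSubContra
    -- `π : C → D` is a morphism of coalgebras:
    (π : C →ₗ[k] D)
    (hπcomul : Coalgebra.comul ∘ₗ π = (TensorProduct.map π π) ∘ₗ Coalgebra.comul)
    (hπcounit : Coalgebra.counit ∘ₗ π = (Coalgebra.counit (R := k) (A := C)))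
    (θB : (D →ₗ[k] B) →ₗ[k] B) (hB : IsContramodule k D θB) :
    IsSubContra k C (freeContra k C B)
      (LinearMap.range (fInd k C D B π - gInd k C D B θB)) ∧
    ∃ θq : (C →ₗ[k] ((C →ₗ[k] B) ⧸
              LinearMap.range (fInd k C D B π - gInd k C D B θB))) →ₗ[k]
            ((C →ₗ[k] B) ⧸ LinearMap.range (fInd k C D B π - gInd k C D B θB)),
      ∀ Φ : C →ₗ[k] (C →ₗ[k] B),
        θq ((LinearMap.range (fInd k C D B π - gInd k C D B θB)).mkQ ∘ₗ Φ)
          = (LinearMap.range (fInd k C D B π - gInd k C D B θB)).mkQ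
              (freeContra k C B Φ) := by

  set F := fInd k C D B π - gInd k C D B θB with hF
  have hsub : IsSubContra k C (freeContra k C B) (LinearMap.range F) := by
    intro φ hφ
    obtain ⟨Φ, hΦ⟩ := Module.projective_lifting_property F.rangeRestrict
      (φ.codRestrict (LinearMap.range F) (fun c => hφ ⟨c, rfl⟩))
      F.surjective_rangeRestrict
    have hφeq : F ∘ₗ Φ = φ :=
      LinearMap.ext fun c => congrArg Subtype.val (LinearMap.congr_fun hΦ c)
    rw [← hφeq, indKey]
    exact ⟨indLift k C D B Φ, rfl⟩
  refine ⟨hsub, ?_⟩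
  obtain ⟨s, hs⟩ := (LinearMap.range F).mkQ.exists_rightInverse_of_surjective
    (Submodule.range_mkQ _)
  refine ⟨(LinearMap.range F).mkQ ∘ₗ freeContra k C B ∘ₗ
      LinearMap.llcomp k C ((C →ₗ[k] B) ⧸ LinearMap.range F) (C →ₗ[k] B) s, ?_⟩
  intro Φ
  show (LinearMap.range F).mkQ (freeContra k C B (s ∘ₗ ((LinearMap.range F).mkQ ∘ₗ Φ)))
      = (LinearMap.range F).mkQ (freeContra k C B Φ)
  rw [Submodule.mkQ_apply, Submodule.mkQ_apply, Submodule.Quotient.eq, ← map_sub]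
  apply hsub
  rintro _ ⟨c, rfl⟩
  rw [← Submodule.Quotient.mk_eq_zero]
  show (LinearMap.range F).mkQ ((s ∘ₗ ((LinearMap.range F).mkQ ∘ₗ Φ) - Φ) c) = 0
  rw [LinearMap.sub_apply, map_sub, sub_eq_zero, LinearMap.comp_apply, LinearMap.comp_apply]
  exact LinearMap.congr_fun hs ((LinearMap.range F).mkQ (Φ c))

end
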